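/- arXiv:2005.04341 — 6 statements merged into one kernel-verified Lean document; each statement's English description precedes it below -/
import Mathlib

section
/- With notation as above (ψ ∈ S a unit vector, dim S = M, global depolarization ρ_err = I/N, 0 < ε < 1): the ratio of the post-selected infidelity to the uncorrected infidelity satisfies (1 − ⟨ψ|ρ'|ψ⟩)/(1 − ⟨ψ|ρ̃|ψ⟩) ≤ (M−1)/(N−1) · (1/(1−ε)), where ρ̃ = (1−ε)|ψ⟩⟨ψ| + ε I/N and ρ' is the projected and renormalized state. -/
open Matrix ComplexOrder

lemma vmv_mulVec {N : ℕ} (a b v : Fin N → ℂ) :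
    vecMulVec a b *ᵥ v = (b ⬝ᵥ v) • a := by
  ext i
  simp [mulVec, dotProduct, vecMulVec_apply, Finset.mul_sum, mul_assoc, mul_comm, mul_left_comm]

lemma vmv_mul_vmv {N : ℕ} (a b c d : Fin N → ℂ) :
    vecMulVec a b * vecMulVec c d = (b ⬝ᵥ c) • vecMulVec a d := by
  ext i j
  simp only [mul_apply, vecMulVec_apply, Matrix.smul_apply, dotProduct, Finset.sum_mul, smul_eq_mul]
  apply Finset.sum_congr rfl
  intros; ring

lemma trace_vmv {N : ℕ} (a b : Fin N → ℂ) :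
    (vecMulVec a b).trace = b ⬝ᵥ a := by
  simp [Matrix.trace, Matrix.diag, vecMulVec_apply, dotProduct, mul_comm]

lemma dotProduct_sum' {N M : ℕ} (v : Fin N → ℂ) (f : Fin M → Fin N → ℂ) :
    v ⬝ᵥ (∑ i, f i) = ∑ i, v ⬝ᵥ f i := by
  simp only [dotProduct, Finset.sum_apply, Finset.mul_sum]
  rw [Finset.sum_comm]

lemma sum_mulVec' {N M : ℕ} (A : Fin M → Matrix (Fin N) (Fin N) ℂ) (v : Fin N → ℂ) :
    (∑ i, A i) *ᵥ v = ∑ i, A i *ᵥ v := by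
  ext j
  simp only [mulVec, dotProduct, Matrix.sum_apply, Finset.sum_apply, Finset.sum_mul]
  rw [Finset.sum_comm]


/-- The ratio of the post-selected infidelity to the uncorrected infidelity is at most
(M-1)/(N-1) · 1/(1-ε) under global depolarization noise. -/
theorem stmt_4 {N M : ℕ} (hM : 1 ≤ M) (hMN : M ≤ N) (hN : 2 ≤ N)
    (s : Fin M → (Fin N → ℂ))
    (hon : ∀ i j, star (s i) ⬝ᵥ s j = if i = j then 1 else 0)
    (ψ : Fin N → ℂ) (hψ : star ψ ⬝ᵥ ψ = 1)
    (c : Fin M → ℂ) (hψS : ψ = ∑ i, c i • s i)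
    (ε : ℝ) (hε0 : 0 < ε) (hε1 : ε < 1)
    (MS ρt A ρ' : Matrix (Fin N) (Fin N) ℂ)
    (hMS : MS = ∑ i, vecMulVec (s i) (star (s i)))
    (hρt : ρt = (1 - (ε : ℂ)) • vecMulVec ψ (star ψ)
        + ((ε : ℂ) / N) • (1 : Matrix (Fin N) (Fin N) ℂ))
    (hA : A = MS * ρt * MS)
    (hρ' : ρ' = (A.trace)⁻¹ • A) :
    (1 - star ψ ⬝ᵥ ρ' *ᵥ ψ).re / (1 - star ψ ⬝ᵥ ρt *ᵥ ψ).re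
      ≤ ((M : ℝ) - 1) / ((N : ℝ) - 1) * (1 / (1 - ε)) := by
  have hNR : (2:ℝ) ≤ (N:ℝ) := by exact_mod_cast hN
  have hcoef : ∀ i, star (s i) ⬝ᵥ ψ = c i := by
    intro i
    rw [hψS, dotProduct_sum']
    simp only [dotProduct_smul, hon, smul_eq_mul]
    rw [Finset.sum_eq_single i] <;> simp +contextual [eq_comm]
  have hMSψ : MS *ᵥ ψ = ψ := by
    rw [hMS, sum_mulVec']
    simp only [vmv_mulVec, hcoef]
    exact hψS.symm
  have hMS2 : MS * MS = MS := by
    rw [hMS, Finset.sum_mul]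
    apply Finset.sum_congr rfl
    intro i _
    rw [Finset.mul_sum]
    simp only [vmv_mul_vmv, hon]
    rw [Finset.sum_eq_single i] <;> simp +contextual [eq_comm]
  have hρtψ : ρt *ᵥ ψ = ((1 - (ε:ℂ)) + ε/N) • ψ := by
    rw [hρt, Matrix.add_mulVec, Matrix.smul_mulVec, Matrix.smul_mulVec,
      vmv_mulVec, hψ, one_smul, one_mulVec, add_smul]
  set a : ℝ := (1 - ε) + ε/N with ha
  have haC : ((1:ℂ) - ε) + (ε:ℂ)/N = (a:ℂ) := by rw [ha]; push_cast; ring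
  have h1 : star ψ ⬝ᵥ ρt *ᵥ ψ = (a:ℂ) := by
    rw [hρtψ, dotProduct_smul, hψ, smul_eq_mul, mul_one, haC]
  have hAψ : star ψ ⬝ᵥ A *ᵥ ψ = (a:ℂ) := by
    rw [hA, ← Matrix.mulVec_mulVec, ← Matrix.mulVec_mulVec, hMSψ, hρtψ,
      Matrix.mulVec_smul, hMSψ, dotProduct_smul, hψ, smul_eq_mul, mul_one, haC]
  set t : ℝ := (1 - ε) + ε*M/N with ht
  have htrMS : MS.trace = (M:ℂ) := by
    rw [hMS, Matrix.trace_sum]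
    simp only [trace_vmv, hon]
    simp
  have htrPMS : (vecMulVec ψ (star ψ) * MS).trace = 1 := by
    rw [hMS, Finset.mul_sum, Matrix.trace_sum]
    simp only [vmv_mul_vmv, Matrix.trace_smul, trace_vmv, smul_eq_mul]
    have : ∀ i : Fin M, star ψ ⬝ᵥ s i * (star (s i) ⬝ᵥ ψ) = star ψ ⬝ᵥ (c i • s i) := by
      intro i
      rw [hcoef i, dotProduct_smul, smul_eq_mul, mul_comm]
    simp only [this]
    rw [← dotProduct_sum', ← hψS, hψ]
  have htrA : A.trace = (t:ℂ) := by
    rw [hA, Matrix.trace_mul_cycle, hMS2, hρt, Matrix.mul_add, Matrix.mul_smul,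
      Matrix.mul_smul, Matrix.trace_add, Matrix.trace_smul, Matrix.trace_smul,
      Matrix.mul_one, htrMS, Matrix.trace_mul_comm MS, htrPMS]
    simp only [smul_eq_mul, mul_one]
    rw [ht]; push_cast; ring
  -- now the scalar computation
  have h2 : star ψ ⬝ᵥ ρ' *ᵥ ψ = ((t⁻¹ * a : ℝ) : ℂ) := by
    rw [hρ', Matrix.smul_mulVec, dotProduct_smul, smul_eq_mul, hAψ, htrA]
    push_cast; ring
  rw [h1, h2]
  have hre1 : (1 - ((t⁻¹*a : ℝ):ℂ)).re = 1 - t⁻¹*a := by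
    simp [Complex.sub_re]
  have hre2 : (1 - ((a : ℝ):ℂ)).re = 1 - a := by simp [Complex.sub_re]
  rw [hre1, hre2]
  -- real inequality
  have hNpos : (0:ℝ) < N := by linarith
  have hMR : (1:ℝ) ≤ (M:ℝ) := by exact_mod_cast hM
  have hMNR : (M:ℝ) ≤ (N:ℝ) := by exact_mod_cast hMN
  have htpos : 0 < t := by
    rw [ht]; have : 0 < ε * M / N := by positivity
    linarith
  have hN0 : (N:ℝ) ≠ 0 := by linarith
  have hN1 : (0:ℝ) < (N:ℝ) - 1 := by linarith
  have h1a : 1 - a = ε * ((N:ℝ) - 1) / N := by rw [ha]; field_simp; ring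
  have h1apos : 0 < 1 - a := by
    rw [h1a]; exact div_pos (mul_pos hε0 hN1) hNpos
  have htma : t - a = ε * ((M:ℝ) - 1) / N := by rw [ht, ha]; field_simp; ring
  have hta : 1 - t⁻¹ * a = ε * ((M:ℝ) - 1) / ((N:ℝ) * t) := by
    rw [inv_mul_eq_div, one_sub_div htpos.ne', htma, div_div]
  rw [hta, h1a, div_mul_div_comm, mul_one]
  have hL : (ε*((M:ℝ)-1)/((N:ℝ)*t)) / (ε*((N:ℝ)-1)/N) = ((M:ℝ)-1)/(((N:ℝ)-1)*t) := by
    field_simp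
  rw [hL]
  have hkey : (1 - ε) ≤ t := by
    rw [ht]; have : 0 ≤ ε * M / N := by positivity
    linarith
  exact div_le_div_of_nonneg_left (by linarith) (by nlinarith) (by nlinarith)
end

section
/- In the setting of the previous statement, the infidelity of the post-selected state satisfies 1 − ⟨ψ|ρ'|ψ⟩ ≤ (ε/(1−ε)) · Tr Λ. In particular, if Tr Λ = 0 then ρ' = |ψ⟩⟨ψ|. -/
open Matrix ComplexOrder

/-- The infidelity of the post-selected state is at most (ε/(1-ε))·Tr Λ; in
particular, if Tr Λ = 0 then ρ' = |ψ⟩⟨ψ| exactly. -/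
theorem stmt_9 {N : ℕ} (ψ : Fin N → ℂ) (hψ : star ψ ⬝ᵥ ψ = 1)
    (ε : ℝ) (hε0 : 0 ≤ ε) (hε1 : ε < 1)
    (Λ : Matrix (Fin N) (Fin N) ℂ) (hΛ : Λ.PosSemidef) (hΛtr : (Λ.trace).re ≤ 1)
    (ρ' : Matrix (Fin N) (Fin N) ℂ)
    (hρ' : ρ' = ((1 - (ε : ℂ)) + (ε : ℂ) * Λ.trace)⁻¹ •
        ((1 - (ε : ℂ)) • vecMulVec ψ (star ψ) + (ε : ℂ) • Λ)) :
    (1 - star ψ ⬝ᵥ ρ' *ᵥ ψ).re ≤ (ε / (1 - ε)) * (Λ.trace).re ∧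
      (Λ.trace = 0 → ρ' = vecMulVec ψ (star ψ)) := by
  have h1ε : (0:ℝ) < 1 - ε := by linarith
  obtain ⟨B, rfl⟩ : ∃ B : Matrix (Fin N) (Fin N) ℂ, Λ = Bᴴ * B := by
    open scoped MatrixOrder in
    exact CStarAlgebra.nonneg_iff_eq_star_mul_self.mp hΛ.nonneg
  set Λ := Bᴴ * B with hΛdef
  have htr_eq : Λ.trace = ((∑ i, ∑ j, Complex.normSq (B j i) : ℝ) : ℂ) := by
    simp only [Matrix.trace, Matrix.diag, hΛdef, Matrix.mul_apply,
      Matrix.conjTranspose_apply]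
    push_cast
    congr 1
    ext i
    congr 1
    ext j
    rw [Complex.normSq_eq_conj_mul_self]
    rfl
  set tr : ℝ := ∑ i, ∑ j, Complex.normSq (B j i) with htrdef
  have htr0 : 0 ≤ tr :=
    Finset.sum_nonneg fun i _ => Finset.sum_nonneg fun j _ => Complex.normSq_nonneg _
  -- the quadratic form value is a nonneg real
  set q : ℂ := star ψ ⬝ᵥ Λ *ᵥ ψ with hqdef
  have hq : 0 ≤ q := hΛ.dotProduct_mulVec_nonneg ψ
  rw [Complex.nonneg_iff] at hq
  have hq_eq : q = ((q.re : ℝ) : ℂ) := Complex.ext (by simp) (by simp [hq.2])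
  set qr : ℝ := q.re with hqrdef
  -- projector action
  have hproj : (vecMulVec ψ (star ψ)) *ᵥ ψ = (star ψ ⬝ᵥ ψ) • ψ := by
    ext i
    simp [vecMulVec_apply, mulVec, dotProduct, Finset.mul_sum, mul_comm, mul_assoc,
      mul_left_comm]
  have hcr : (0:ℝ) < 1 - ε + ε * tr := by nlinarith [mul_nonneg hε0 htr0]
  -- the fidelity
  have hF : star ψ ⬝ᵥ ρ' *ᵥ ψ =
      (((1 - ε + ε * tr)⁻¹ * ((1 - ε) + ε * qr) : ℝ) : ℂ) := by
    rw [hρ', htr_eq]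
    rw [smul_mulVec, add_mulVec, smul_mulVec, smul_mulVec, hproj, hψ]
    simp only [dotProduct_smul, dotProduct_add, one_smul, smul_eq_mul, ← hqdef, hq_eq, hψ]
    push_cast
    ring
  constructor
  · rw [hF, htr_eq]
    simp only [Complex.ofReal_re, Complex.sub_re, Complex.one_re]
    have key : 1 - (1 - ε + ε * tr)⁻¹ * ((1 - ε) + ε * qr) ≤ ε / (1 - ε) * tr := by
      have hqr0 : 0 ≤ qr := hq.1
      calc 1 - (1 - ε + ε * tr)⁻¹ * ((1 - ε) + ε * qr)
          ≤ 1 - (1 - ε + ε * tr)⁻¹ * (1 - ε) := by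
            have : (1 - ε + ε * tr)⁻¹ * (1 - ε) ≤
                (1 - ε + ε * tr)⁻¹ * ((1 - ε) + ε * qr) :=
              mul_le_mul_of_nonneg_left (by nlinarith [mul_nonneg hε0 hqr0])
                (inv_pos.2 hcr).le
            linarith
        _ = ε * tr / (1 - ε + ε * tr) := by field_simp; ring
        _ ≤ ε * tr / (1 - ε) := by
            gcongr
            nlinarith [mul_nonneg hε0 htr0]
        _ = ε / (1 - ε) * tr := by ring
    exact key
  · intro htr
    have htr' : tr = 0 := by
      have := htr_eq.symm.trans htr
      exact_mod_cast this
    have hB : B = 0 := by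
      ext j i
      have : Complex.normSq (B j i) = 0 := by
        have hall := (Finset.sum_eq_zero_iff_of_nonneg
          (fun i _ => Finset.sum_nonneg fun j _ => Complex.normSq_nonneg (B j i))).mp htr'
        have := (Finset.sum_eq_zero_iff_of_nonneg
          (fun j _ => Complex.normSq_nonneg (B j i))).mp (hall i (Finset.mem_univ i)) j
          (Finset.mem_univ j)
        exact this
      simpa using Complex.normSq_eq_zero.mp this
    have hΛ0 : Λ = 0 := by rw [hΛdef, hB]; simp
    rw [hρ', htr, hΛ0]
    simp only [smul_zero, add_zero, mul_zero, smul_smul]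
    rw [inv_mul_cancel₀ (by
      intro h
      have : (1:ℂ) - ε = 0 := h
      have : (1:ℝ) - ε = 0 := by exact_mod_cast congrArg Complex.re this
      linarith)]
    simp
end

section
/- Let U be a unitary on a bipartite space H_A ⊗ H_B (both finite-dimensional), let e₀ ∈ H_B be a unit vector, and suppose that for two linearly independent unit vectors ψ₁, ψ₂ ∈ H_A and also for the unit vector proportional to ψ₁ + ψ₂, U(ψ ⊗ e₀) = ψ ⊗ φ_ψ holds for some unit vector φ_ψ ∈ H_B (depending on ψ). Then φ_{ψ₁} = φ_{ψ₂} up to a phase; i.e., there exists a unit vector φ ∈ H_B and phases c₁, c₂ with |cᵢ|=1 such that U(ψᵢ ⊗ e₀) = cᵢ (ψᵢ ⊗ φ) for i = 1, 2. -/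
open Matrix ComplexOrder

/-- The tensor product of two vectors. -/
def tensorVec {a b : ℕ} (ψ : Fin a → ℂ) (φ : Fin b → ℂ) : Fin a × Fin b → ℂ :=
  fun p => ψ p.1 * φ p.2

/-- No-cloning-style rigidity: if a unitary sends ψᵢ ⊗ e₀ to ψᵢ ⊗ φᵢ for two linearly
independent unit vectors and also for the normalized superposition, then the
environment states coincide up to a phase. -/
theorem stmt_10 {a b : ℕ}
    (U : Matrix (Fin a × Fin b) (Fin a × Fin b) ℂ)
    (hU : U ∈ Matrix.unitaryGroup (Fin a × Fin b) ℂ)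
    (e₀ : Fin b → ℂ) (he₀ : star e₀ ⬝ᵥ e₀ = 1)
    (ψ₁ ψ₂ ψ₃ : Fin a → ℂ)
    (hψ₁ : star ψ₁ ⬝ᵥ ψ₁ = 1) (hψ₂ : star ψ₂ ⬝ᵥ ψ₂ = 1) (hψ₃ : star ψ₃ ⬝ᵥ ψ₃ = 1)
    (hli : LinearIndependent ℂ ![ψ₁, ψ₂])
    (c : ℂ) (hc : c ≠ 0) (hψ₃def : ψ₃ = c • (ψ₁ + ψ₂))
    (φ₁ φ₂ φ₃ : Fin b → ℂ)
    (hφ₁ : star φ₁ ⬝ᵥ φ₁ = 1) (hφ₂ : star φ₂ ⬝ᵥ φ₂ = 1) (hφ₃ : star φ₃ ⬝ᵥ φ₃ = 1)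
    (h1 : U *ᵥ tensorVec ψ₁ e₀ = tensorVec ψ₁ φ₁)
    (h2 : U *ᵥ tensorVec ψ₂ e₀ = tensorVec ψ₂ φ₂)
    (h3 : U *ᵥ tensorVec ψ₃ e₀ = tensorVec ψ₃ φ₃) :
    ∃ (φ : Fin b → ℂ) (c₁ c₂ : ℂ), star φ ⬝ᵥ φ = 1 ∧ ‖c₁‖ = 1 ∧ ‖c₂‖ = 1 ∧
      U *ᵥ tensorVec ψ₁ e₀ = c₁ • tensorVec ψ₁ φ ∧
      U *ᵥ tensorVec ψ₂ e₀ = c₂ • tensorVec ψ₂ φ := by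
  -- Linearity: tensorVec ψ₃ e₀ = c • (tensorVec ψ₁ e₀ + tensorVec ψ₂ e₀)
  have hlin : tensorVec ψ₃ e₀ = c • (tensorVec ψ₁ e₀ + tensorVec ψ₂ e₀) := by
    funext p
    simp [tensorVec, hψ₃def, Pi.add_apply, Pi.smul_apply, smul_eq_mul]
    ring
  have key : tensorVec ψ₃ φ₃ = c • (tensorVec ψ₁ φ₁ + tensorVec ψ₂ φ₂) := by
    rw [← h3, hlin, Matrix.mulVec_smul, Matrix.mulVec_add, h1, h2]
  -- pointwise equation
  have hpt : ∀ (i : Fin a) (j : Fin b),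
      ψ₁ i * φ₃ j + ψ₂ i * φ₃ j = ψ₁ i * φ₁ j + ψ₂ i * φ₂ j := by
    intro i j
    have := congrFun key (i, j)
    simp only [tensorVec, hψ₃def, Pi.smul_apply, Pi.add_apply, smul_eq_mul] at this
    have h' : c * (ψ₁ i * φ₃ j + ψ₂ i * φ₃ j) = c * (ψ₁ i * φ₁ j + ψ₂ i * φ₂ j) := by
      linear_combination this
    exact mul_left_cancel₀ hc h'
  have hpair := LinearIndependent.pair_iff.mp hli
  have heq : ∀ j : Fin b, φ₃ j = φ₁ j ∧ φ₃ j = φ₂ j := by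
    intro j
    have hz : (φ₃ j - φ₁ j) • ψ₁ + (φ₃ j - φ₂ j) • ψ₂ = 0 := by
      funext i
      simp only [Pi.add_apply, Pi.smul_apply, smul_eq_mul, Pi.zero_apply]
      linear_combination hpt i j
    obtain ⟨ha, hb⟩ := hpair _ _ hz
    exact ⟨sub_eq_zero.mp ha, sub_eq_zero.mp hb⟩
  have hφeq : φ₁ = φ₂ := by
    funext j
    rw [← (heq j).1, (heq j).2]
  refine ⟨φ₁, 1, 1, hφ₁, by norm_num, by norm_num, by simpa using h1, ?_⟩
  rw [hφeq] at *
  simpa using h2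
end

section
/- Let U be a unitary on H_A ⊗ H_B and e₀ ∈ H_B a unit vector. Suppose U(ψ_a ⊗ e₀ ψ_a† ⊗ e₀†)U† traced over H_B equals |ψ_a⟩⟨ψ_a| for every unit vector ψ_a in a subspace S ⊆ H_A, i.e., Tr_B[U(|ψ_a⟩⟨ψ_a| ⊗ |e₀⟩⟨e₀|)U†] = |ψ_a⟩⟨ψ_a|. Then there is a unit vector φ ∈ H_B such that U(v ⊗ e₀) = v ⊗ φ for all v ∈ S (after adjusting U by a global phase on S ⊗ e₀). -/
open Matrix ComplexOrder

/-- Partial trace over the second tensor factor. -/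
noncomputable def ptraceB {a b : ℕ} (M : Matrix (Fin a × Fin b) (Fin a × Fin b) ℂ) :
    Matrix (Fin a) (Fin a) ℂ :=
  fun i j => ∑ k : Fin b, M (i, k) (j, k)

private lemma sum_mul_conj_eq_zero' {ι : Type*} [Fintype ι] {d : ι → ℂ}
    (h : ∑ i, d i * (starRingEnd ℂ) (d i) = 0) : ∀ i, d i = 0 := by
  have h' : ∑ i, (Complex.normSq (d i) : ℂ) = 0 := by simpa [Complex.mul_conj] using h
  have h'' : ∑ i, Complex.normSq (d i) = 0 := by exact_mod_cast h'
  intro i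
  have := (Finset.sum_eq_zero_iff_of_nonneg
    (fun j _ => Complex.normSq_nonneg (d j))).1 h'' i (Finset.mem_univ i)
  exact Complex.normSq_eq_zero.mp this

private lemma eq_of_unit_dot' {n : ℕ} {f g : Fin n → ℂ}
    (hf : star f ⬝ᵥ f = 1) (hg : star g ⬝ᵥ g = 1) (hfg : star f ⬝ᵥ g = 1) : f = g := by
  have e1 : ∑ i, f i * (starRingEnd ℂ) (f i) = 1 := by
    simpa [dotProduct, mul_comm] using hf
  have e4 : ∑ i, g i * (starRingEnd ℂ) (g i) = 1 := by
    simpa [dotProduct, mul_comm] using hg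
  have e3 : ∑ i, g i * (starRingEnd ℂ) (f i) = 1 := by
    simpa [dotProduct, mul_comm] using hfg
  have e2 : ∑ i, f i * (starRingEnd ℂ) (g i) = 1 := by
    have := congrArg (starRingEnd ℂ) e3
    simpa [map_sum, mul_comm] using this
  have key : ∑ i, (f i - g i) * (starRingEnd ℂ) (f i - g i) = 0 := by
    simp only [map_sub, sub_mul, mul_sub, Finset.sum_sub_distrib]
    rw [e1, e2, e3, e4]; ring
  funext i
  exact sub_eq_zero.mp (sum_mul_conj_eq_zero' key i)

private lemma tensor_dot' {a b : ℕ} (u v : Fin a → ℂ) (f g : Fin b → ℂ) :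
    star (tensorVec u f) ⬝ᵥ tensorVec v g = (star u ⬝ᵥ v) * (star f ⬝ᵥ g) := by
  simp only [dotProduct, tensorVec, Pi.star_apply, Fintype.sum_prod_type,
    Finset.sum_mul_sum]
  refine Finset.sum_congr rfl fun i _ => Finset.sum_congr rfl fun k _ => ?_
  simp [star_mul']; ring

private lemma conj_vecMulVec' {n : Type*} [Fintype n] [DecidableEq n]
    (U : Matrix n n ℂ) (x : n → ℂ) :
    U * vecMulVec x (star x) * Uᴴ = vecMulVec (U *ᵥ x) (star (U *ᵥ x)) := by
  ext i j
  simp only [mul_apply, vecMulVec_apply, conjTranspose_apply, vecMulVec, mulVec, dotProduct,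
    Pi.star_apply, of_apply, Finset.sum_mul, Finset.mul_sum, star_sum, star_mul']
  refine Finset.sum_congr rfl fun k _ => Finset.sum_congr rfl fun l _ => ?_
  ring

private lemma exists_phi' {a b : ℕ} {Ψ : Fin a × Fin b → ℂ} {ψ : Fin a → ℂ}
    (hψ : star ψ ⬝ᵥ ψ = 1)
    (hG : ∀ i j, ∑ k, Ψ (i,k) * (starRingEnd ℂ) (Ψ (j,k)) = ψ i * (starRingEnd ℂ) (ψ j)) :
    ∃ φ : Fin b → ℂ, star φ ⬝ᵥ φ = 1 ∧ Ψ = tensorVec ψ φ := by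
  set C := starRingEnd ℂ with hC
  set φ : Fin b → ℂ := fun k => ∑ j, C (ψ j) * Ψ (j, k) with hφ
  have hψ1 : ∑ i, C (ψ i) * ψ i = 1 := by simpa [dotProduct] using hψ
  have hψ1' : ∑ i, ψ i * C (ψ i) = 1 := by simpa [mul_comm] using hψ1
  have hφφ : ∑ k, C (φ k) * φ k = 1 := by
    have step : ∀ k, C (φ k) * φ k
        = ∑ j, ∑ j', (ψ j * C (ψ j')) * (Ψ (j', k) * C (Ψ (j, k))) := by
      intro k
      rw [hφ]
      simp only [map_sum, _root_.map_mul, RingHomCompTriple.comp_apply, Complex.conj_conj,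
        Finset.sum_mul_sum]
      refine Finset.sum_congr rfl fun j _ => Finset.sum_congr rfl fun j' _ => ?_
      simp [hC]; ring
    calc ∑ k, C (φ k) * φ k
        = ∑ k, ∑ j, ∑ j', (ψ j * C (ψ j')) * (Ψ (j', k) * C (Ψ (j, k))) :=
          Finset.sum_congr rfl fun k _ => step k
      _ = ∑ j, ∑ j', (ψ j * C (ψ j')) * ∑ k, Ψ (j', k) * C (Ψ (j, k)) := by
          rw [Finset.sum_comm]
          refine Finset.sum_congr rfl fun j _ => ?_
          rw [Finset.sum_comm]
          refine Finset.sum_congr rfl fun j' _ => ?_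
          rw [Finset.mul_sum]
      _ = ∑ j, ∑ j', (ψ j * C (ψ j')) * (ψ j' * C (ψ j)) := by
          refine Finset.sum_congr rfl fun j _ => Finset.sum_congr rfl fun j' _ => ?_
          rw [hG]
      _ = (∑ j, ψ j * C (ψ j)) * (∑ j', C (ψ j') * ψ j') := by
          rw [Finset.sum_mul_sum]
          refine Finset.sum_congr rfl fun j _ => Finset.sum_congr rfl fun j' _ => ?_
          ring
      _ = 1 := by rw [hψ1', hψ1, one_mul]
  have hBsum : ∀ k, ∑ i, C (ψ i) * Ψ (i, k) = φ k := fun k => rfl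
  have hB : ∑ i, ∑ k, Ψ (i, k) * (C (ψ i) * C (φ k)) = 1 := by
    rw [Finset.sum_comm]
    calc ∑ k, ∑ i, Ψ (i, k) * (C (ψ i) * C (φ k))
        = ∑ k, C (φ k) * ∑ i, C (ψ i) * Ψ (i, k) := by
          refine Finset.sum_congr rfl fun k _ => ?_
          rw [Finset.mul_sum]
          refine Finset.sum_congr rfl fun i _ => by ring
      _ = ∑ k, C (φ k) * φ k := by
          refine Finset.sum_congr rfl fun k _ => by rw [hBsum]
      _ = 1 := hφφ
  have hCsum : ∑ i, ∑ k, (ψ i * φ k) * C (Ψ (i, k)) = 1 := by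
    have := congrArg C hB
    simpa [map_sum, _root_.map_mul, Complex.conj_conj, mul_comm, mul_left_comm,
      mul_assoc] using this
  have hA : ∑ i, ∑ k, Ψ (i, k) * C (Ψ (i, k)) = 1 := by
    calc ∑ i, ∑ k, Ψ (i, k) * C (Ψ (i, k)) = ∑ i, ψ i * C (ψ i) :=
          Finset.sum_congr rfl fun i _ => hG i i
      _ = 1 := hψ1'
  have hD : ∑ i, ∑ k, (ψ i * φ k) * C (ψ i * φ k) = 1 := by
    calc ∑ i, ∑ k, (ψ i * φ k) * C (ψ i * φ k)
        = ∑ i, (ψ i * C (ψ i)) * ∑ k, φ k * C (φ k) := by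
          refine Finset.sum_congr rfl fun i _ => ?_
          rw [Finset.mul_sum]
          refine Finset.sum_congr rfl fun k _ => ?_
          simp only [_root_.map_mul, hC]
          ring
      _ = (∑ i, ψ i * C (ψ i)) * ∑ k, φ k * C (φ k) := by rw [← Finset.sum_mul]
      _ = 1 := by
          have h1 : ∑ k, φ k * C (φ k) = 1 := by
            rw [← hφφ]
            exact Finset.sum_congr rfl fun k _ => mul_comm _ _
          rw [h1, hψ1', one_mul]
  have key : ∑ p : Fin a × Fin b, (Ψ p - ψ p.1 * φ p.2) * C (Ψ p - ψ p.1 * φ p.2) = 0 := by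
    rw [Fintype.sum_prod_type]
    have expand : ∀ (i : Fin a) (k : Fin b),
        (Ψ (i,k) - ψ i * φ k) * C (Ψ (i,k) - ψ i * φ k)
        = Ψ (i,k) * C (Ψ (i,k)) - Ψ (i,k) * (C (ψ i) * C (φ k))
          - (ψ i * φ k) * C (Ψ (i,k)) + (ψ i * φ k) * C (ψ i * φ k) := by
      intro i k
      simp only [map_sub, _root_.map_mul, hC]
      ring
    calc ∑ i, ∑ k, (Ψ (i,k) - ψ i * φ k) * C (Ψ (i,k) - ψ i * φ k)
        = (∑ i, ∑ k, Ψ (i,k) * C (Ψ (i,k))) - (∑ i, ∑ k, Ψ (i,k) * (C (ψ i) * C (φ k)))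
          - (∑ i, ∑ k, (ψ i * φ k) * C (Ψ (i,k))) + ∑ i, ∑ k, (ψ i * φ k) * C (ψ i * φ k) := by
          simp only [expand, Finset.sum_add_distrib, Finset.sum_sub_distrib]
      _ = 1 - 1 - 1 + 1 := by rw [hA, hB, hCsum, hD]
      _ = 0 := by ring
  refine ⟨φ, ?_, ?_⟩
  · have h2 : ∑ k, C (φ k) * φ k = star φ ⬝ᵥ φ := by
      simp [dotProduct, hC]
    rw [← h2, hφφ]
  · funext p
    have h0 := sum_mul_conj_eq_zero' key p
    have h1 : Ψ p = ψ p.1 * φ p.2 := sub_eq_zero.mp h0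
    simpa [tensorVec] using h1

/-- If tracing out the environment of U(|ψ⟩⟨ψ| ⊗ |e₀⟩⟨e₀|)U† returns |ψ⟩⟨ψ| for every
unit vector ψ in a subspace S, then (after absorbing a global phase) there is a single
unit environment state φ with U(v ⊗ e₀) = v ⊗ φ for all v ∈ S. -/
theorem stmt_11 {a b : ℕ}
    (U : Matrix (Fin a × Fin b) (Fin a × Fin b) ℂ)
    (hU : U ∈ Matrix.unitaryGroup (Fin a × Fin b) ℂ)
    (e₀ : Fin b → ℂ) (he₀ : star e₀ ⬝ᵥ e₀ = 1)
    (S : Submodule ℂ (Fin a → ℂ))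
    (h : ∀ ψ ∈ S, star ψ ⬝ᵥ ψ = 1 →
      ptraceB (U * vecMulVec (tensorVec ψ e₀) (star (tensorVec ψ e₀)) * Uᴴ)
        = vecMulVec ψ (star ψ)) :
    ∃ φ : Fin b → ℂ, star φ ⬝ᵥ φ = 1 ∧
      ∀ v ∈ S, U *ᵥ tensorVec v e₀ = tensorVec v φ := by
  classical
  have hinner : ∀ x y : Fin a × Fin b → ℂ,
      star (U *ᵥ x) ⬝ᵥ (U *ᵥ y) = star x ⬝ᵥ y := by
    intro x y
    have h1 : Uᴴ * U = 1 := hU.1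
    rw [star_mulVec, dotProduct_mulVec, vecMul_vecMul, h1, vecMul_one]
  have hz : ∀ {m : ℕ} (f : Fin m → ℂ), tensorVec (0 : Fin a → ℂ) f = 0 := by
    intro m f; funext p; simp [tensorVec]
  have key : ∀ ψ, ψ ∈ S → star ψ ⬝ᵥ ψ = 1 →
      ∃ φ : Fin b → ℂ, star φ ⬝ᵥ φ = 1 ∧ U *ᵥ tensorVec ψ e₀ = tensorVec ψ φ := by
    intro ψ hψS hψu
    have hh := h ψ hψS hψu
    rw [conj_vecMulVec'] at hh
    have hG : ∀ i j, ∑ k, (U *ᵥ tensorVec ψ e₀) (i,k)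
        * (starRingEnd ℂ) ((U *ᵥ tensorVec ψ e₀) (j,k)) = ψ i * (starRingEnd ℂ) (ψ j) := by
      intro i j
      have h2 : ptraceB (vecMulVec (U *ᵥ tensorVec ψ e₀) (star (U *ᵥ tensorVec ψ e₀))) i j
          = vecMulVec ψ (star ψ) i j := by rw [hh]
      simp only [ptraceB, vecMulVec_apply, Pi.star_apply] at h2
      simp only [starRingEnd_apply]
      exact h2
    obtain ⟨φ, h1, h2⟩ := exists_phi' hψu hG
    exact ⟨φ, h1, h2⟩
  have cmp : ∀ ψ₁ φ₁ ψ₂ φ₂ : _, star ψ₁ ⬝ᵥ ψ₁ = 1 → star φ₁ ⬝ᵥ φ₁ = 1 →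
      star ψ₂ ⬝ᵥ ψ₂ = 1 → star φ₂ ⬝ᵥ φ₂ = 1 →
      U *ᵥ tensorVec ψ₁ e₀ = tensorVec ψ₁ φ₁ → U *ᵥ tensorVec ψ₂ e₀ = tensorVec ψ₂ φ₂ →
      star ψ₁ ⬝ᵥ ψ₂ ≠ 0 → φ₁ = φ₂ := by
    intro ψ₁ φ₁ ψ₂ φ₂ hu1 hf1 hu2 hf2 he1 he2 hne
    have h1 : star (tensorVec ψ₁ φ₁) ⬝ᵥ tensorVec ψ₂ φ₂ = star ψ₁ ⬝ᵥ ψ₂ := by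
      rw [← he1, ← he2, hinner, tensor_dot', he₀, mul_one]
    rw [tensor_dot'] at h1
    have h2 : star φ₁ ⬝ᵥ φ₂ = 1 :=
      mul_left_cancel₀ hne (h1.trans (mul_one _).symm)
    exact eq_of_unit_dot' hf1 hf2 h2
  have norm_ex : ∀ v : Fin a → ℂ, v ≠ 0 → ∃ c : ℂ, c ≠ 0 ∧ star (c • v) ⬝ᵥ (c • v) = 1 := by
    intro v hv
    have hvv : star v ⬝ᵥ v = ((∑ i, Complex.normSq (v i) : ℝ) : ℂ) := by
      simp only [dotProduct, Pi.star_apply, Complex.ofReal_sum]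
      refine Finset.sum_congr rfl fun i _ => ?_
      rw [Complex.star_def, Complex.normSq_eq_conj_mul_self]
    set s : ℝ := ∑ i, Complex.normSq (v i) with hs
    have hs0 : 0 < s := by
      rcases Function.ne_iff.mp hv with ⟨i0, hi0⟩
      have hpos : 0 < Complex.normSq (v i0) := Complex.normSq_pos.mpr hi0
      exact Finset.sum_pos' (fun i _ => Complex.normSq_nonneg (v i))
        ⟨i0, Finset.mem_univ i0, hpos⟩
    have hsq : Real.sqrt s ≠ 0 := by positivity
    refine ⟨((Real.sqrt s)⁻¹ : ℝ), ?_, ?_⟩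
    · simpa using inv_ne_zero hsq
    · rw [star_smul, smul_dotProduct, dotProduct_smul, hvv]
      rw [smul_eq_mul, smul_eq_mul]
      have hstar : star (((Real.sqrt s)⁻¹ : ℝ) : ℂ) = (((Real.sqrt s)⁻¹ : ℝ) : ℂ) := by
        rw [Complex.star_def, Complex.conj_ofReal]
      rw [hstar]
      have hre : ((Real.sqrt s)⁻¹ * ((Real.sqrt s)⁻¹ * s) : ℝ) = 1 := by
        field_simp; linarith [Real.sq_sqrt hs0.le]
      exact_mod_cast hre
  by_cases hS0 : ∀ v ∈ S, v = (0 : Fin a → ℂ)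
  · refine ⟨e₀, he₀, fun v hv => ?_⟩
    rw [hS0 v hv, hz e₀, mulVec_zero]
  · push_neg at hS0
    obtain ⟨v₀, hv₀S, hv₀⟩ := hS0
    obtain ⟨c₀, hc₀, hc₀u⟩ := norm_ex v₀ hv₀
    have hψ₀S : c₀ • v₀ ∈ S := S.smul_mem _ hv₀S
    obtain ⟨φ, hφu, hφe⟩ := key (c₀ • v₀) hψ₀S hc₀u
    refine ⟨φ, hφu, ?_⟩
    intro v hv
    by_cases hv0 : v = 0
    · rw [hv0, hz e₀, hz φ, mulVec_zero]
    obtain ⟨c, hc, hcu⟩ := norm_ex v hv0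
    have hψS : c • v ∈ S := S.smul_mem _ hv
    obtain ⟨φ', hφ'u, hφ'e⟩ := key (c • v) hψS hcu
    have hmain : φ = φ' := by
      by_cases hd : star (c₀ • v₀) ⬝ᵥ (c • v) = 0
      · -- orthogonal case: go through the midpoint w
        have hdsymm : star (c • v) ⬝ᵥ (c₀ • v₀) = 0 := by
          have := congrArg (starRingEnd ℂ) hd
          simpa [dotProduct, map_sum, mul_comm] using this
        set r : ℂ := (((Real.sqrt 2)⁻¹ : ℝ) : ℂ) with hr
        have hrstar : star r = r := by rw [hr, Complex.star_def, Complex.conj_ofReal]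
        have hrne : r ≠ 0 := by
          rw [hr]
          simp only [ne_eq, Complex.ofReal_eq_zero, inv_eq_zero]
          positivity
        set w : Fin a → ℂ := r • ((c₀ • v₀) + (c • v)) with hw
        have hwS : w ∈ S := S.smul_mem _ (S.add_mem hψ₀S hψS)
        have hwu : star w ⬝ᵥ w = 1 := by
          rw [hw, star_smul, smul_dotProduct, dotProduct_smul, star_add,
            add_dotProduct, dotProduct_add, dotProduct_add, hc₀u, hcu, hd, hdsymm, hrstar]
          rw [smul_eq_mul, smul_eq_mul, hr]
          have hre : ((Real.sqrt 2)⁻¹ * ((Real.sqrt 2)⁻¹ * (1 + 0 + (0 + 1))) : ℝ) = 1 := by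
            have hsq2 : Real.sqrt 2 ≠ 0 := by positivity
            field_simp; linarith [Real.sq_sqrt (show (0:ℝ) ≤ 2 by norm_num)]
          exact_mod_cast hre
        obtain ⟨φw, hφwu, hφwe⟩ := key w hwS hwu
        have d1 : star (c₀ • v₀) ⬝ᵥ w ≠ 0 := by
          rw [hw, dotProduct_smul, dotProduct_add, hc₀u, hd, add_zero, smul_eq_mul, mul_one]
          exact hrne
        have d2 : star w ⬝ᵥ (c • v) ≠ 0 := by
          rw [hw, star_smul, smul_dotProduct, star_add, add_dotProduct, hd, hcu,
            zero_add, hrstar, smul_eq_mul, mul_one]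
          exact hrne
        have e1 : φ = φw := cmp _ _ _ _ hc₀u hφu hwu hφwu hφe hφwe d1
        have e2 : φw = φ' := cmp _ _ _ _ hwu hφwu hcu hφ'u hφwe hφ'e d2
        exact e1.trans e2
      · exact cmp _ _ _ _ hc₀u hφu hcu hφ'u hφe hφ'e hd
    -- conclude from hφ'e with ψ = c • v
    have lin1 : tensorVec (c • v) e₀ = c • tensorVec v e₀ := by
      funext p; simp [tensorVec, Pi.smul_apply, smul_eq_mul]; ring
    have lin2 : tensorVec (c • v) φ' = c • tensorVec v φ' := by
      funext p; simp only [tensorVec, Pi.smul_apply, smul_eq_mul]; ring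
    have hfin : c • (U *ᵥ tensorVec v e₀) = c • tensorVec v φ := by
      rw [← mulVec_smul, ← lin1, hφ'e, lin2, ← hmain]
    exact smul_right_injective (Fin a × Fin b → ℂ) hc hfin
end

section
/- (Theorem 1 of the paper, channel form.) Let S be a subspace of the finite-dimensional Hilbert space H, and let Ê(ρ) = Σ_m E_m ρ E_m† be a quantum operation with Σ_m E_m† E_m ≤ I. Suppose Ê(|ψ⟩⟨ψ|) = |ψ⟩⟨ψ| for every unit vector ψ ∈ S. Then Ê(Λ) = Λ for every positive semidefinite matrix Λ whose support is contained in S. -/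
open Matrix ComplexOrder

/-- Theorem 1 (channel form): a trace-nonincreasing quantum operation that fixes every
pure state of a subspace S fixes every positive semidefinite matrix supported in S. -/
theorem stmt_12 {N : ℕ} {ι : Type} [Fintype ι]
    (E : ι → Matrix (Fin N) (Fin N) ℂ)
    (hE : (1 - ∑ m, (E m)ᴴ * E m).PosSemidef)
    (S : Submodule ℂ (Fin N → ℂ))
    (hfix : ∀ ψ : Fin N → ℂ, ψ ∈ S → star ψ ⬝ᵥ ψ = 1 →
      ∑ m, E m * vecMulVec ψ (star ψ) * (E m)ᴴ = vecMulVec ψ (star ψ))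
    (Λ : Matrix (Fin N) (Fin N) ℂ) (hΛ : Λ.PosSemidef)
    (hsupp : ∀ v : Fin N → ℂ, Λ *ᵥ v ∈ S) :
    ∑ m, E m * Λ * (E m)ᴴ = Λ := by
  have hH := hΛ.1
  set u : Fin N → Fin N → ℂ := fun k => ⇑(hH.eigenvectorBasis k) with hu
  have hdecomp : Λ = ∑ k, (hH.eigenvalues k : ℂ) • vecMulVec (u k) (star (u k)) := by
    conv_lhs => rw [hH.spectral_theorem]
    ext i j
    simp [Matrix.mul_apply, Matrix.sum_apply, vecMulVec_apply, Finset.mul_sum,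
      Finset.sum_mul, diagonal, u]
    apply Finset.sum_congr rfl
    intro k _
    ring
  have key : ∀ k, ∑ m, E m * ((hH.eigenvalues k : ℂ) • vecMulVec (u k) (star (u k))) * (E m)ᴴ
      = (hH.eigenvalues k : ℂ) • vecMulVec (u k) (star (u k)) := by
    intro k
    by_cases hk : (hH.eigenvalues k : ℂ) = 0
    · simp [hk]
    · have hmem : u k ∈ S := by
        have h1 : Λ *ᵥ u k = (hH.eigenvalues k : ℂ) • u k := by
          simpa using hH.mulVec_eigenvectorBasis k
        have : u k = (hH.eigenvalues k : ℂ)⁻¹ • (Λ *ᵥ u k) := by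
          rw [h1, smul_smul, inv_mul_cancel₀ hk, one_smul]
        rw [this]
        exact S.smul_mem _ (hsupp _)
      have hnorm : star (u k) ⬝ᵥ u k = 1 := by
        have := hH.eigenvectorBasis.orthonormal.1 k
        have h2 : (inner ℂ (hH.eigenvectorBasis k) (hH.eigenvectorBasis k) : ℂ) = 1 := by
          rw [inner_self_eq_norm_sq_to_K, this]; norm_num
        rw [← h2, EuclideanSpace.inner_eq_star_dotProduct, dotProduct_comm]
      have := hfix (u k) hmem hnorm
      calc ∑ m, E m * ((hH.eigenvalues k : ℂ) • vecMulVec (u k) (star (u k))) * (E m)ᴴ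
          = (hH.eigenvalues k : ℂ) • ∑ m, E m * vecMulVec (u k) (star (u k)) * (E m)ᴴ := by
            rw [Finset.smul_sum]; congr 1; ext m : 1; rw [mul_smul_comm, smul_mul_assoc]
        _ = _ := by rw [this]
  calc ∑ m, E m * Λ * (E m)ᴴ
      = ∑ k, ∑ m, E m * ((hH.eigenvalues k : ℂ) • vecMulVec (u k) (star (u k))) * (E m)ᴴ := by
        rw [Finset.sum_comm]
        apply Finset.sum_congr rfl
        intro m _
        conv_lhs => rw [hdecomp]
        rw [Finset.mul_sum, Finset.sum_mul]
    _ = ∑ k, (hH.eigenvalues k : ℂ) • vecMulVec (u k) (star (u k)) := by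
        exact Finset.sum_congr rfl fun k _ => key k
    _ = Λ := hdecomp.symm
end

section
/- Let Ê(ρ) = Σ_m E_m ρ E_m† with Σ_m E_m† E_m ≤ I be a quantum operation on ℂ^N, and let ψ be a unit vector with Ê(|ψ⟩⟨ψ|) = |ψ⟩⟨ψ|. Then each Kraus operator satisfies E_m ψ = c_m ψ for some scalar c_m with Σ_m |c_m|² = 1. -/
open Matrix ComplexOrder

/-- Kraus-operator fixed-point lemma: if a trace-nonincreasing CP map fixes a pure
state, each Kraus operator has that state as an eigenvector, with eigenvalues whose
squared moduli sum to 1. -/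
theorem stmt_13 {N : ℕ} {ι : Type} [Fintype ι]
    (E : ι → Matrix (Fin N) (Fin N) ℂ)
    (hE : (1 - ∑ m, (E m)ᴴ * E m).PosSemidef)
    (ψ : Fin N → ℂ) (hψ : star ψ ⬝ᵥ ψ = 1)
    (hfix : ∑ m, E m * vecMulVec ψ (star ψ) * (E m)ᴴ = vecMulVec ψ (star ψ)) :
    ∃ c : ι → ℂ, (∀ m, E m *ᵥ ψ = c m • ψ) ∧ ∑ m, ‖c m‖ ^ 2 = 1 := by
  classical
  set v : ι → Fin N → ℂ := fun m => E m *ᵥ ψ with hv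
  set c : ι → ℂ := fun m => star ψ ⬝ᵥ v m with hc
  have hstar : ∀ z : ℂ, z * star z = ((‖z‖ : ℂ)) ^ 2 := fun z => RCLike.mul_conj z
  -- entrywise form of the fixed point equation
  have key : ∀ i j, ∑ m, v m i * star (v m j) = ψ i * star (ψ j) := by
    intro i j
    have h := congrFun (congrFun hfix i) j
    simp only [Matrix.sum_apply, Matrix.vecMulVec_apply, Pi.star_apply] at h
    rw [← h]
    refine Finset.sum_congr rfl fun m _ => ?_
    have h1 : v m i = ∑ k, E m i k * ψ k := by
      simp [hv, Matrix.mulVec, dotProduct]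
    have h2 : star (v m j) = ∑ l, star (E m j l) * star (ψ l) := by
      simp [hv, Matrix.mulVec, dotProduct, star_sum, star_mul']
    rw [h1, h2, Finset.sum_mul_sum]
    symm
    calc (E m * vecMulVec ψ (star ψ) * (E m)ᴴ) i j
        = ∑ l, ∑ k, (E m i k * ψ k) * (star (E m j l) * star (ψ l)) := by
          simp only [Matrix.mul_apply, Matrix.vecMulVec_apply,
            Matrix.conjTranspose_apply, Pi.star_apply, Finset.sum_mul]
          exact Finset.sum_congr rfl fun l _ => Finset.sum_congr rfl fun k _ => by ring
      _ = ∑ k, ∑ l, (E m i k * ψ k) * (star (E m j l) * star (ψ l)) := Finset.sum_comm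
  have hψ' : ∑ i, ψ i * star (ψ i) = 1 := by
    rw [← hψ]; simp only [dotProduct, Pi.star_apply]
    exact Finset.sum_congr rfl fun i _ => mul_comm _ _
  -- sum of |c m|^2 is 1
  have hc2 : ∑ m, c m * star (c m) = 1 := by
    have h0 : ∀ m, c m * star (c m)
        = ∑ i, ∑ j, star (ψ i) * ψ j * (v m i * star (v m j)) := by
      intro m
      have hcm : c m = ∑ i, star (ψ i) * v m i := by
        simp [hc, dotProduct]
      have hcs : star (c m) = ∑ j, ψ j * star (v m j) := by
        simp [hc, dotProduct, star_sum, star_mul', star_star]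
      rw [hcs, hcm, Finset.sum_mul_sum]
      exact Finset.sum_congr rfl fun i _ => Finset.sum_congr rfl fun j _ => by ring
    rw [Finset.sum_congr rfl fun m _ => h0 m]
    rw [Finset.sum_comm]
    have h1 : ∑ i, ∑ m, ∑ j, star (ψ i) * ψ j * (v m i * star (v m j))
        = ∑ i, ∑ j, star (ψ i) * ψ j * (ψ i * star (ψ j)) := by
      refine Finset.sum_congr rfl fun i _ => ?_
      rw [Finset.sum_comm]
      refine Finset.sum_congr rfl fun j _ => ?_
      rw [← Finset.mul_sum, key i j]
    rw [h1]
    have h2 : ∑ i, ∑ j, star (ψ i) * ψ j * (ψ i * star (ψ j))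
        = (∑ i, ψ i * star (ψ i)) * (∑ j, ψ j * star (ψ j)) := by
      rw [Finset.sum_mul_sum]
      exact Finset.sum_congr rfl fun i _ => Finset.sum_congr rfl fun j _ => by ring
    rw [h2, hψ', one_mul]
  -- per-m expansion of the defect
  have expand : ∀ m, ∑ i, (v m i - c m * ψ i) * star (v m i - c m * ψ i)
      = (∑ i, v m i * star (v m i)) - c m * star (c m) := by
    intro m
    have h1 : ∑ i, v m i * star (ψ i) = c m := by
      simp only [hc, dotProduct, Pi.star_apply]
      exact Finset.sum_congr rfl fun i _ => mul_comm _ _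
    have h2 : ∑ i, ψ i * star (v m i) = star (c m) := by
      simp only [hc, dotProduct, Pi.star_apply, star_sum, star_mul', star_star]
    have e : ∑ i, (v m i - c m * ψ i) * star (v m i - c m * ψ i)
        = (∑ i, v m i * star (v m i)) - star (c m) * (∑ i, v m i * star (ψ i))
          - c m * (∑ i, ψ i * star (v m i))
          + c m * star (c m) * (∑ i, ψ i * star (ψ i)) := by
      rw [Finset.mul_sum, Finset.mul_sum, Finset.mul_sum, ← Finset.sum_sub_distrib,
        ← Finset.sum_sub_distrib, ← Finset.sum_add_distrib]
      refine Finset.sum_congr rfl fun i _ => ?_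
      simp only [star_sub, star_mul']
      ring
    rw [e, h1, h2, hψ']
    ring
  -- the total defect vanishes
  have hzero : ∑ m, ∑ i, (v m i - c m * ψ i) * star (v m i - c m * ψ i) = 0 := by
    rw [Finset.sum_congr rfl fun m _ => expand m, Finset.sum_sub_distrib, hc2,
      Finset.sum_comm]
    have h3 : ∑ i, ∑ m, v m i * star (v m i) = ∑ i, ψ i * star (ψ i) :=
      Finset.sum_congr rfl fun i _ => key i i
    rw [h3, hψ', sub_self]
  -- hence each v m = c m • ψ
  have hvm : ∀ m, v m = c m • ψ := by
    have hre : ∑ m, ∑ i, ‖v m i - c m * ψ i‖ ^ 2 = 0 := by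
      have h2 := hzero
      simp only [hstar] at h2
      exact_mod_cast h2
    intro m
    funext i
    have h := (Finset.sum_eq_zero_iff_of_nonneg (fun m _ =>
      Finset.sum_nonneg fun i _ => sq_nonneg _)).mp hre m (Finset.mem_univ m)
    have h' := (Finset.sum_eq_zero_iff_of_nonneg (fun i _ =>
      sq_nonneg ‖v m i - c m * ψ i‖)).mp h i (Finset.mem_univ i)
    have := norm_eq_zero.mp (pow_eq_zero_iff two_ne_zero |>.mp h')
    simpa [sub_eq_zero] using this
  refine ⟨c, fun m => hvm m, ?_⟩
  have hfin : ∑ m, ((‖c m‖ : ℂ)) ^ 2 = 1 := by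
    rw [← hc2]
    exact Finset.sum_congr rfl fun m _ => (hstar (c m)).symm
  exact_mod_cast hfin
end
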